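/- Singular witness for unit-radius interval matrices: Let A ∈ ℝ^{n×n} be symmetric, positive definite, and entrywise nonnegative. If the interval matrix [A − E, A + E] (where E is the all-ones n×n matrix) is singular, i.e., contains a non-invertible matrix, then there exists a sign vector z ∈ {−1, 1}^n such that the matrix A − (z zᵀ)/(zᵀ A^{-1} z) is non-invertible and lies in [A − E, A + E], i.e., every entry of (z zᵀ)/(zᵀ A^{-1} z) has absolute value at most 1. -/

import Mathlib

open Matrix

/-- Singular witness for unit-radius interval matrices: if `A` is symmetric
positive definite with nonnegative entries and the interval matrix
`[A - E, A + E]` contains a non-invertible matrix, then there is a sign vector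
`z ∈ {±1}ⁿ` such that `A - (z zᵀ)/(zᵀ A⁻¹ z)` is non-invertible and lies in
`[A - E, A + E]`. -/
theorem singular_witness_unit_radius {n : ℕ} (A : Matrix (Fin n) (Fin n) ℝ)
    (hSym : A.IsHermitian) (hPD : A.PosDef) (hNonneg : ∀ i j, 0 ≤ A i j)
    (hSing : ∃ B : Matrix (Fin n) (Fin n) ℝ,
      (∀ i j, |B i j - A i j| ≤ 1) ∧ ¬ IsUnit B) :
    ∃ z : Fin n → ℝ, (∀ i, z i = 1 ∨ z i = -1) ∧
      ¬ IsUnit (A - (z ⬝ᵥ (A⁻¹).mulVec z)⁻¹ • Matrix.vecMulVec z z) ∧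
      (∀ i j, |((z ⬝ᵥ (A⁻¹).mulVec z)⁻¹ • Matrix.vecMulVec z z) i j| ≤ 1) := by
  classical
  obtain ⟨B, hB, hBnu⟩ := hSing
  have hdetB : B.det = 0 := by
    by_contra h
    exact hBnu ((Matrix.isUnit_iff_isUnit_det B).2 (isUnit_iff_ne_zero.2 h))
  obtain ⟨x, hx0, hxB⟩ := (Matrix.exists_mulVec_eq_zero_iff).2 hdetB
  set z : Fin n → ℝ := fun i => if x i < 0 then -1 else 1 with hzdef
  have hz1 : ∀ i, z i = 1 ∨ z i = -1 := by
    intro i; by_cases h : x i < 0 <;> simp [hzdef, h]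
  have hzx : ∀ i, z i * x i = |x i| := by
    intro i
    by_cases h : x i < 0
    · simp [hzdef, h, abs_of_neg h]
    · simp [hzdef, h, abs_of_nonneg (not_lt.1 h)]
  have hz0 : z ≠ 0 := by
    obtain ⟨i, hi⟩ := Function.ne_iff.1 hx0
    intro h
    rcases hz1 i with h1 | h1 <;>
      simpa [h1] using congrFun h i
  -- positivity facts
  have hposA : ∀ v : Fin n → ℝ, v ≠ 0 → 0 < v ⬝ᵥ A *ᵥ v := by
    intro v hv; simpa using hPD.dotProduct_mulVec_pos hv
  have hdetA : IsUnit A.det := isUnit_iff_ne_zero.2 (ne_of_gt hPD.det_pos)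
  set lam : ℝ := z ⬝ᵥ (A⁻¹).mulVec z with hlamdef
  have hlam_pos : 0 < lam := by simpa using hPD.inv.dotProduct_mulVec_pos hz0
  set w : Fin n → ℝ := A⁻¹ *ᵥ z with hwdef
  have hAw : A *ᵥ w = z := by
    rw [hwdef, Matrix.mulVec_mulVec, Matrix.mul_nonsing_inv A hdetA, Matrix.one_mulVec]
  have hAT : Aᵀ = A := by
    have := hSym.eq
    rwa [Matrix.conjTranspose_eq_transpose_of_trivial] at this
  -- b = z ⬝ x equals w ⬝ (A x)
  have hb : w ⬝ᵥ A *ᵥ x = z ⬝ᵥ x := by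
    rw [Matrix.dotProduct_mulVec, ← Matrix.mulVec_transpose, hAT, hAw]
  have ha : w ⬝ᵥ A *ᵥ w = lam := by
    rw [Matrix.dotProduct_mulVec, ← Matrix.mulVec_transpose, hAT, hAw]
  have hc_pos : 0 < x ⬝ᵥ A *ᵥ x := hposA x hx0
  set b : ℝ := z ⬝ᵥ x with hbdef
  set c : ℝ := x ⬝ᵥ A *ᵥ x with hcdef
  -- Cauchy-Schwarz: b^2 ≤ lam * c
  have hCS : b ^ 2 ≤ lam * c := by
    have h1 : 0 ≤ (x - (b / lam) • w) ⬝ᵥ A *ᵥ (x - (b / lam) • w) := by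
      simpa using hPD.posSemidef.dotProduct_mulVec_nonneg (x - (b / lam) • w)
    have hsym' : x ⬝ᵥ A *ᵥ w = w ⬝ᵥ A *ᵥ x := by
      rw [Matrix.dotProduct_mulVec, ← Matrix.mulVec_transpose, hAT, dotProduct_comm]
    have hexp : (x - (b / lam) • w) ⬝ᵥ A *ᵥ (x - (b / lam) • w)
        = c - b ^ 2 / lam := by
      rw [Matrix.mulVec_sub, Matrix.mulVec_smul]
      simp only [sub_dotProduct, dotProduct_sub, smul_dotProduct,
        dotProduct_smul, smul_eq_mul]
      rw [hsym', hb, ha]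
      field_simp
      ring
    rw [hexp] at h1
    have := (div_le_iff₀ hlam_pos).1 (by linarith : b ^ 2 / lam ≤ c)
    linarith [this]
  -- c ≤ b^2
  have hcb : c ≤ b ^ 2 := by
    have hAx : A *ᵥ x = (A - B) *ᵥ x := by
      rw [Matrix.sub_mulVec, hxB, sub_zero]
    have hterm : ∀ i j, x i * ((A - B) i j * x j) ≤ |x i| * |x j| := by
      intro i j
      have h1 : |(A - B) i j| ≤ 1 := by
        have := hB i j
        rw [abs_sub_comm] at this
        simpa [Matrix.sub_apply] using this
      calc x i * ((A - B) i j * x j) ≤ |x i * ((A - B) i j * x j)| := le_abs_self _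
        _ = |x i| * (|(A - B) i j| * |x j|) := by rw [abs_mul, abs_mul]
        _ ≤ |x i| * (1 * |x j|) := by
            gcongr
        _ = |x i| * |x j| := by ring
    have hcsum : c = ∑ i, ∑ j, x i * ((A - B) i j * x j) := by
      rw [hcdef, hAx]
      simp [dotProduct, Matrix.mulVec, dotProduct, Finset.mul_sum]
    have hbsum : b ^ 2 = (∑ i, |x i|) * (∑ j, |x j|) := by
      rw [hbdef]
      simp only [dotProduct, hzx]
      ring
    rw [hcsum, hbsum, Finset.sum_mul_sum]
    apply Finset.sum_le_sum
    intro i _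
    apply Finset.sum_le_sum
    intro j _
    exact hterm i j
  have hlam1 : 1 ≤ lam := by
    nlinarith
  refine ⟨z, hz1, ?_, ?_⟩
  · -- A - lam⁻¹ • zzᵀ is singular with kernel vector w
    have hw0 : w ≠ 0 := by
      intro h
      apply hz0
      rw [← hAw, h, Matrix.mulVec_zero]
    have hker : (A - lam⁻¹ • Matrix.vecMulVec z z) *ᵥ w = 0 := by
      have hvv : Matrix.vecMulVec z z *ᵥ w = lam • z := by
        ext i
        have h : (Matrix.vecMulVec z z *ᵥ w) i = z i * (z ⬝ᵥ w) := by
          simp [Matrix.mulVec, Matrix.vecMulVec_apply, dotProduct,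
            Finset.mul_sum, mul_assoc]
        rw [h, hlamdef, Pi.smul_apply, smul_eq_mul, mul_comm]
      rw [Matrix.sub_mulVec, hAw, Matrix.smul_mulVec, hvv, smul_smul,
        inv_mul_cancel₀ (ne_of_gt hlam_pos), one_smul, sub_self]
    intro hU
    have hdet : (A - lam⁻¹ • Matrix.vecMulVec z z).det = 0 :=
      Matrix.exists_mulVec_eq_zero_iff.1 ⟨w, hw0, hker⟩
    rw [Matrix.isUnit_iff_isUnit_det, hdet] at hU
    exact (isUnit_iff_ne_zero.1 hU) rfl
  · intro i j
    have hzz : |z i * z j| = 1 := by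
      rcases hz1 i with h1 | h1 <;> rcases hz1 j with h2 | h2 <;> simp [h1, h2]
    rw [Matrix.smul_apply, Matrix.vecMulVec_apply, smul_eq_mul, abs_mul, hzz, mul_one,
      abs_inv, abs_of_pos hlam_pos]
    rw [inv_le_one_iff₀]
    right; exact hlam1
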